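/- Let n be a prime number, and let G be a transitive subgroup of the symmetric group on {1,…,2n} containing the permutation σ_∞ = (1,2,…,n)(n+1,n+2,…,2n). Fix an integer r with 0 ≤ r < n and suppose that ℬ = {B_1,…,B_n} is an imprimitivity system of G where, for i = 1,…,n, B_i = {i, n + (((i − 1 + r) mod n) + 1)}. Suppose further that there exists σ ∈ G such that the image σ({1,…,n}) meets both {1,…,n} and {n+1,…,2n}. Let G act on ℚ^{2n} by permuting coordinates, let v ∈ ℚ^{2n} be the vector whose first n coordinates equal 1 and whose last n coordinates equal −1, and let w ∈ ℚ^{2n} be the indicator vector of the block B₁ (value 1 on the two elements of B₁, 0 elsewhere). Then the standard basis vector e₁ belongs to V + ℚ·w, where V is the ℚ-linear span of the orbit {g·v : g ∈ G}. -/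

import Mathlib

open Fin.NatCast Fin.CommRing in
open Polynomial in
lemma aux_span_shift (n : ℕ) [NeZero n] (hn : n.Prime) (P : Submodule ℚ (Fin n → ℚ))
    (hP : ∀ x ∈ P, (fun i => x (i+1)) ∈ P)
    (h1 : (fun _ => (1:ℚ)) ∈ P)
    (d : Fin n → ℚ) (hd : d ∈ P) (hd0 : d ≠ 0) (hdsum : ∑ i, d i = 0) :
    (fun i : Fin n => if i = 0 then (1:ℚ) else 0) ∈ P := by
  haveI : Fact n.Prime := ⟨hn⟩
  set T : Module.End ℚ (Fin n → ℚ) := LinearMap.funLeft ℚ ℚ (fun i : Fin n => i + 1) with hTdef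
  have hTapp : ∀ (x : Fin n → ℚ) (i : Fin n), T x i = x (i + 1) := fun x i => rfl
  have hsum_shift : ∀ x : Fin n → ℚ, ∑ i, x (i + 1) = ∑ i, x i := by
    intro x
    exact Fintype.sum_equiv (Equiv.addRight 1) _ _ (fun i => rfl)
  have hTpow : ∀ (k : ℕ) (x : Fin n → ℚ) (i : Fin n), (T^k) x i = x (i + (k : Fin n)) := by
    intro k
    induction k with
    | zero => intro x i; simp
    | succ k ih =>
      intro x i
      rw [pow_succ, Module.End.mul_apply, ih (T x) i, hTapp]
      congr 1
      push_cast
      ring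
  have hTpowP : ∀ (k : ℕ) (x : Fin n → ℚ), x ∈ P → (T^k) x ∈ P := by
    intro k
    induction k with
    | zero => intro x hx; simpa using hx
    | succ k ih =>
      intro x hx
      rw [pow_succ, Module.End.mul_apply]
      exact ih _ (hP x hx)
  have hTpowsum : ∀ (k : ℕ) (x : Fin n → ℚ), ∑ i, (T^k) x i = ∑ i, x i := by
    intro k
    induction k with
    | zero => intro x; simp
    | succ k ih =>
      intro x
      rw [pow_succ, Module.End.mul_apply, ih (T x)]
      exact hsum_shift x
  have hTn : T ^ n = 1 := by
    apply LinearMap.ext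
    intro x
    funext i
    rw [hTpow n x i, Fin.natCast_self, add_zero]
    rfl
  have hconst : ∀ c : Fin n → ℚ, T c = c → ∀ i : Fin n, c i = c 0 := by
    intro c hc
    have key : ∀ m : ℕ, c ((m : Fin n)) = c 0 := by
      intro m
      induction m with
      | zero => simp
      | succ m ih =>
        have h1' : c ((m : Fin n) + 1) = c (m : Fin n) := by
          rw [← hTapp c ((m : Fin n)), hc]
        push_cast
        rw [h1', ih]
    intro i
    have : ((i.val : ℕ) : Fin n) = i := Fin.cast_val_eq_self i
    rw [← this, key]
  set Φ : ℚ[X] := Polynomial.cyclotomic n ℚ with hΦdef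
  have hΦmul : Φ * ((X:ℚ[X]) - 1) = (X:ℚ[X])^n - 1 := by
    rw [hΦdef, Polynomial.cyclotomic_prime ℚ n]
    exact geom_sum_mul X n
  have haevalXn : (Polynomial.aeval T) ((X:ℚ[X])^n - 1) = 0 := by
    rw [map_sub, Polynomial.aeval_X_pow, map_one, hTn, sub_self]
  -- Φ(T) d = 0
  have hΦd : (Polynomial.aeval T Φ) d = 0 := by
    set c : Fin n → ℚ := (Polynomial.aeval T Φ) d with hcdef
    have hTc : T c = c := by
      have h2 : (Polynomial.aeval T ((X:ℚ[X]) - 1)) c = 0 := by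
        rw [hcdef, ← Module.End.mul_apply, ← map_mul, mul_comm, hΦmul, haevalXn]
        rfl
      rw [map_sub, Polynomial.aeval_X, map_one] at h2
      have h3 : T c - c = 0 := h2
      rw [sub_eq_zero] at h3
      exact h3
    have hcsum : ∑ i, c i = 0 := by
      have hcform : c = ∑ k ∈ Finset.range n, (T^k) d := by
        rw [hcdef, hΦdef, Polynomial.cyclotomic_prime ℚ n, map_sum]
        rw [LinearMap.sum_apply]
        apply Finset.sum_congr rfl
        intro k _
        rw [Polynomial.aeval_X_pow]
      rw [hcform]
      simp only [Finset.sum_apply]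
      rw [Finset.sum_comm]
      apply Finset.sum_eq_zero
      intro k _
      rw [hTpowsum k d]
      exact hdsum
    have hc0 : c 0 = 0 := by
      have : ∑ i : Fin n, c i = ∑ i : Fin n, c 0 := Finset.sum_congr rfl (fun i _ => hconst c hTc i)
      rw [hcsum, Finset.sum_const, Finset.card_univ, Fintype.card_fin] at this
      have hnne : (n:ℚ) ≠ 0 := Nat.cast_ne_zero.mpr hn.ne_zero
      rw [nsmul_eq_mul] at this
      rcases mul_eq_zero.mp this.symm with h | h
      · exact absurd h hnne
      · exact h
    funext i
    rw [hconst c hTc i, hc0]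
    rfl
  have hn2 : 2 ≤ n := hn.two_le
  -- killing lemma: low-degree annihilators are zero
  have hkill : ∀ p : ℚ[X], (Polynomial.aeval T p) d = 0 → p.natDegree < n - 1 → p = 0 := by
    intro p hpd hdeg
    by_contra hp0
    have hΦirr : Irreducible Φ := Polynomial.cyclotomic.irreducible_rat hn.pos
    have hnd : ¬ Φ ∣ p := by
      intro hdvd
      apply hp0
      apply Polynomial.eq_zero_of_dvd_of_degree_lt hdvd
      have h2' : Φ.degree = ((n - 1 : ℕ) : WithBot ℕ) := by
        rw [hΦdef, Polynomial.degree_cyclotomic, Nat.totient_prime hn]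
      calc p.degree ≤ (p.natDegree : WithBot ℕ) := Polynomial.degree_le_natDegree
        _ < ((n-1 : ℕ) : WithBot ℕ) := by exact_mod_cast hdeg
        _ = Φ.degree := h2'.symm
    obtain ⟨a, bb, hab⟩ := (hΦirr.coprime_iff_not_dvd.mpr hnd)
    have hdz : d = 0 := by
      have hcc := congrArg (fun q => (Polynomial.aeval T q) d) hab
      simp only [map_add, map_mul, map_one] at hcc
      rw [LinearMap.add_apply, Module.End.mul_apply, Module.End.mul_apply, hΦd, hpd,
        map_zero, map_zero, add_zero] at hcc
      exact hcc.symm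
    exact hd0 hdz
  -- linear independence of d, Td, ..., T^(n-2) d
  set bfam : Fin (n-1) → (Fin n → ℚ) := fun k => (T^(k:ℕ)) d with hbdef
  have hli : LinearIndependent ℚ bfam := by
    rw [Fintype.linearIndependent_iff]
    intro g hg
    set p : ℚ[X] := ∑ k : Fin (n-1), Polynomial.C (g k) * X^(k:ℕ) with hpdef
    have hpd : (Polynomial.aeval T p) d = 0 := by
      rw [hpdef, map_sum, LinearMap.sum_apply, ← hg]
      apply Finset.sum_congr rfl
      intro k _
      rw [map_mul, Polynomial.aeval_C, Polynomial.aeval_X_pow, Module.End.mul_apply,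
        Module.algebraMap_end_apply]
    have hpdeg : p.natDegree < n - 1 := by
      have hle : p.natDegree ≤ n - 2 := by
        apply Polynomial.natDegree_sum_le_of_forall_le
        intro k _
        refine le_trans (Polynomial.natDegree_C_mul_le _ _) ?_
        rw [Polynomial.natDegree_X_pow]
        have := k.isLt
        omega
      omega
    have hp0 : p = 0 := hkill p hpd hpdeg
    intro k
    have hco := congrArg (fun q => Polynomial.coeff q (k:ℕ)) hp0
    simp only [hpdef, Polynomial.finset_sum_coeff, Polynomial.coeff_C_mul,
      Polynomial.coeff_X_pow, Polynomial.coeff_zero] at hco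
    rw [Finset.sum_eq_single k] at hco
    · simpa using hco
    · intro j _ hjk
      rw [if_neg, mul_zero]
      intro h
      exact hjk (Fin.ext h.symm)
    · intro h
      exact absurd (Finset.mem_univ k) h
  -- the sum functional
  set l : (Fin n → ℚ) →ₗ[ℚ] ℚ := ∑ i : Fin n, LinearMap.proj i with hldef
  have hlapp : ∀ x : Fin n → ℚ, l x = ∑ i, x i := by
    intro x
    rw [hldef]
    simp [LinearMap.sum_apply]
  have hnne : (n:ℚ) ≠ 0 := Nat.cast_ne_zero.mpr hn.ne_zero
  have hlsurj : Function.Surjective l := by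
    intro q
    refine ⟨fun i => if i = 0 then q else 0, ?_⟩
    rw [hlapp]
    simp
  have hrange : LinearMap.range l = ⊤ := LinearMap.range_eq_top.mpr hlsurj
  have hfinH : Module.finrank ℚ (LinearMap.ker l) = n - 1 := by
    have h := LinearMap.finrank_range_add_finrank_ker l
    rw [hrange, finrank_top, Module.finrank_self, Module.finrank_pi] at h
    rw [Fintype.card_fin] at h
    omega
  set U : Submodule ℚ (Fin n → ℚ) := Submodule.span ℚ (Set.range bfam) with hUdef
  have hfinU : Module.finrank ℚ U = n - 1 := by
    rw [hUdef, finrank_span_eq_card hli, Fintype.card_fin]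
  have hUH : U ≤ LinearMap.ker l := by
    rw [hUdef, Submodule.span_le]
    rintro _ ⟨k, rfl⟩
    rw [SetLike.mem_coe, LinearMap.mem_ker, hlapp, hbdef]
    rw [hTpowsum]
    exact hdsum
  have hHU : LinearMap.ker l = U :=
    (Submodule.eq_of_le_of_finrank_le hUH (by rw [hfinU, hfinH])).symm
  have hUP : U ≤ P := by
    rw [hUdef, Submodule.span_le]
    rintro _ ⟨k, rfl⟩
    exact hTpowP _ _ hd
  have hker_sub : ∀ y, l y = 0 → y ∈ P := fun y hy => hUP (hHU ▸ LinearMap.mem_ker.mpr hy)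
  have hy : l ((fun i : Fin n => if i = 0 then (1:ℚ) else 0) - (n:ℚ)⁻¹ • (fun _ => (1:ℚ))) = 0 := by
    rw [map_sub, LinearMap.map_smul, hlapp, hlapp]
    have h1s : ∑ i : Fin n, (if i = (0:Fin n) then (1:ℚ) else 0) = 1 := by simp
    have h2s : ∑ _i : Fin n, (1:ℚ) = n := by simp
    rw [h1s, h2s, smul_eq_mul, inv_mul_cancel₀ hnne, sub_self]
  have hfin := P.add_mem (hker_sub _ hy) (P.smul_mem ((n:ℚ)⁻¹) h1)
  rw [sub_add_cancel] at hfin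
  exact hfin

open Fin.NatCast Fin.CommRing in
set_option maxHeartbeats 1000000 in
/-- Let `n` be prime, `G` a transitive subgroup of the symmetric group on `{0,…,2n-1}`
(0-indexed version of `{1,…,2n}`) containing `σ_∞ = (0,…,n-1)(n,…,2n-1)`.  Suppose the
sets `B_i = {i, n + (i + r) mod n}`, `0 ≤ i < n`, form an imprimitivity system of `G`
(for a fixed `0 ≤ r < n`), and that some `σ ∈ G` maps `{0,…,n-1}` onto a set meeting
both halves.  With `G` acting on `ℚ^{2n}` by permuting coordinates, `v` the vector which
is `1` on the first half and `-1` on the second half, and `w` the indicator vector of the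
block `B₀ = {0, n + r}`, the first standard basis vector `e₁` lies in `V + ℚ·w`, where
`V` is the span of the orbit of `v` under `G`. -/
theorem prime_case_single_pairing_system
    (n : ℕ) (hn : n.Prime) (r : ℕ) (hr : r < n)
    (G : Subgroup (Equiv.Perm (Fin (2 * n))))
    (σinf : Equiv.Perm (Fin (2 * n))) (hσinfG : σinf ∈ G)
    (hσinf : ∀ i : Fin (2 * n),
      ((σinf i : ℕ) = if (i : ℕ) < n then ((i : ℕ) + 1) % n else n + (((i : ℕ) - n + 1) % n)))
    (htrans : ∀ i j : Fin (2 * n), ∃ g ∈ G, g i = j)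
    (B₀ : Set (Fin (2 * n))) (hB₀ : B₀ = {x : Fin (2 * n) | (x : ℕ) = 0 ∨ (x : ℕ) = n + r})
    (hblock : ∀ g ∈ G, ⇑g '' B₀ = B₀ ∨ Disjoint (⇑g '' B₀) B₀)
    (hsys : ∀ g ∈ G, ∃ i < n,
      ⇑g '' B₀ = {x : Fin (2 * n) | (x : ℕ) = i ∨ (x : ℕ) = n + ((i + r) % n)})
    (hmix : ∃ g ∈ G,
      (∃ x : Fin (2 * n), (x : ℕ) < n ∧ ((g x : ℕ) < n)) ∧
      (∃ x : Fin (2 * n), (x : ℕ) < n ∧ n ≤ (g x : ℕ)))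
    (v : Fin (2 * n) → ℚ) (hv : v = fun i : Fin (2 * n) => if (i : ℕ) < n then (1 : ℚ) else -1)
    (w : Fin (2 * n) → ℚ)
    (hw : w = fun i : Fin (2 * n) => if (i : ℕ) = 0 ∨ (i : ℕ) = n + r then (1 : ℚ) else 0)
    (e₁ : Fin (2 * n) → ℚ) (he₁ : e₁ = fun i : Fin (2 * n) => if (i : ℕ) = 0 then (1 : ℚ) else 0) :
    e₁ ∈ Submodule.span ℚ {x : Fin (2 * n) → ℚ | ∃ g ∈ G, x = fun j => v (g⁻¹ j)} ⊔
      Submodule.span ℚ {w} := by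
  haveI : NeZero n := ⟨hn.ne_zero⟩
  have hn2 : 2 ≤ n := hn.two_le
  have hnpos : 0 < n := hn.pos
  have hn2n : n ≤ 2*n := by omega
  have h02 : 0 < 2*n := by omega
  have hadd : ∀ m : ℕ, m < n → n + m < 2*n := fun m hm => by omega
  set S : Set (Fin (2*n) → ℚ) := {x : Fin (2 * n) → ℚ | ∃ g ∈ G, x = fun j => v (g⁻¹ j)}
    with hSdef
  set V : Submodule ℚ (Fin (2*n) → ℚ) := Submodule.span ℚ S with hVdef
  set emb : Fin n → Fin (2*n) := fun i => ⟨i.val, lt_of_lt_of_le i.isLt hn2n⟩ with hembdef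
  set emb2 : Fin n → Fin (2*n) :=
    fun i => ⟨n + ((i.val + r) % n), hadd _ (Nat.mod_lt _ hnpos)⟩ with hemb2def
  -- sum over a block is zero
  have hpair : ∀ m : ℕ, m < n → ∀ a b : Fin (2*n),
      a ∈ {x : Fin (2 * n) | (x : ℕ) = m ∨ (x : ℕ) = n + ((m + r) % n)} →
      b ∈ {x : Fin (2 * n) | (x : ℕ) = m ∨ (x : ℕ) = n + ((m + r) % n)} →
      a ≠ b → v a + v b = 0 := by
    intro m hm a b ha hb hab
    simp only [Set.mem_setOf_eq] at ha hb
    rcases ha with h1 | h1 <;> rcases hb with h2 | h2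
    · exact absurd (Fin.ext (h1.trans h2.symm)) hab
    · simp only [hv]
      rw [if_pos (by omega), if_neg (by omega)]
      ring
    · simp only [hv]
      rw [if_neg (by omega), if_pos (by omega)]
      ring
    · exact absurd (Fin.ext (h1.trans h2.symm)) hab
  -- every block is a translate of B₀, so G⁻¹ maps blocks to blocks
  have hBtrans : ∀ g ∈ G, ∀ m : ℕ, m < n → ∃ jj < n,
      ⇑g⁻¹ '' {x : Fin (2 * n) | (x : ℕ) = m ∨ (x : ℕ) = n + ((m + r) % n)} =
        {x : Fin (2 * n) | (x : ℕ) = jj ∨ (x : ℕ) = n + ((jj + r) % n)} := by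
    intro g hg m hm
    have hm2 : m < 2 * n := by omega
    obtain ⟨h, hhG, hh0⟩ := htrans ⟨0, h02⟩ ⟨m, hm2⟩
    obtain ⟨j₁, hj₁, hB₁⟩ := hsys h hhG
    have h0mem : (⟨0, h02⟩ : Fin (2*n)) ∈ B₀ := by rw [hB₀]; left; rfl
    have himem : (⟨m, hm2⟩ : Fin (2*n)) ∈ ⇑h '' B₀ := ⟨_, h0mem, hh0⟩
    rw [hB₁] at himem
    simp only [Set.mem_setOf_eq] at himem
    have hmj : m = j₁ := by
      rcases himem with h' | h'
      · exact h'
      · exfalso; omega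
    subst hmj
    obtain ⟨j, hj, hBj⟩ := hsys (g⁻¹ * h) (mul_mem (inv_mem hg) hhG)
    refine ⟨j, hj, ?_⟩
    calc ⇑g⁻¹ '' {x : Fin (2 * n) | (x : ℕ) = m ∨ (x : ℕ) = n + ((m + r) % n)}
        = ⇑g⁻¹ '' (⇑h '' B₀) := by rw [hB₁]
      _ = ⇑(g⁻¹ * h) '' B₀ := by rw [Equiv.Perm.coe_mul, Set.image_comp]
      _ = _ := hBj
  -- every element of V is anti-symmetric across blocks
  have hVW : ∀ x ∈ V, ∀ i : Fin n, x (emb2 i) = - x (emb i) := by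
    intro x hx
    refine Submodule.span_induction ?_ ?_ ?_ ?_ hx
    · rintro x ⟨g, hg, rfl⟩ i
      obtain ⟨j, hj, hBj⟩ := hBtrans g hg i.val i.isLt
      have hmem1 : emb i ∈ {x : Fin (2 * n) | (x : ℕ) = (i:ℕ) ∨ (x : ℕ) = n + (((i:ℕ) + r) % n)} := by
        left; rfl
      have hmem2 : emb2 i ∈ {x : Fin (2 * n) | (x : ℕ) = (i:ℕ) ∨ (x : ℕ) = n + (((i:ℕ) + r) % n)} := by
        right; rfl
      have ha : g⁻¹ (emb i) ∈ {x : Fin (2 * n) | (x : ℕ) = j ∨ (x : ℕ) = n + ((j + r) % n)} := by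
        rw [← hBj]; exact ⟨emb i, hmem1, rfl⟩
      have hb : g⁻¹ (emb2 i) ∈ {x : Fin (2 * n) | (x : ℕ) = j ∨ (x : ℕ) = n + ((j + r) % n)} := by
        rw [← hBj]; exact ⟨emb2 i, hmem2, rfl⟩
      have hne : g⁻¹ (emb2 i) ≠ g⁻¹ (emb i) := by
        intro hcon
        have h2 := (Equiv.injective g⁻¹) hcon
        have h3 := congrArg Fin.val h2
        simp only [hembdef, hemb2def] at h3
        have := Nat.mod_lt ((i:ℕ) + r) hnpos
        omega
      have hp := hpair j hj _ _ hb ha hne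
      show v (g⁻¹ (emb2 i)) = - v (g⁻¹ (emb i))
      linarith
    · intro i; simp
    · intro x y _ _ hx hy i
      simp only [Pi.add_apply, hx i, hy i]; ring
    · intro a x _ hx i
      simp only [Pi.smul_apply, hx i, smul_eq_mul]; ring
  -- projection to the first half and shift operator
  set πL : (Fin (2*n) → ℚ) →ₗ[ℚ] (Fin n → ℚ) := LinearMap.funLeft ℚ ℚ emb with hπdef
  set A : (Fin (2*n) → ℚ) →ₗ[ℚ] (Fin (2*n) → ℚ) := LinearMap.funLeft ℚ ℚ ⇑σinf with hAdef
  have hone : ((1 : Fin n) : ℕ) = 1 := by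
    have : ((1 : Fin n) : ℕ) = 1 % n := rfl
    rw [this, Nat.mod_eq_of_lt (by omega)]
  have hσemb : ∀ i : Fin n, σinf (emb i) = emb (i + 1) := by
    intro i
    apply Fin.ext
    have h1 := hσinf (emb i)
    have hval : ((emb i : Fin (2*n)) : ℕ) = (i:ℕ) := rfl
    rw [hval, if_pos i.isLt] at h1
    rw [h1]
    show ((i:ℕ) + 1) % n = ((i + 1 : Fin n) : ℕ)
    rw [Fin.val_add, hone]
  have hπA : ∀ x : Fin (2*n) → ℚ, πL (A x) = fun i => (πL x) (i+1) := by
    intro x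
    funext i
    show x (σinf (emb i)) = x (emb (i+1))
    rw [hσemb]
  have hAV : ∀ x ∈ V, A x ∈ V := by
    intro x hx
    refine Submodule.span_induction ?_ ?_ ?_ ?_ hx
    · rintro x ⟨g, hg, rfl⟩
      apply Submodule.subset_span
      refine ⟨σinf⁻¹ * g, mul_mem (inv_mem hσinfG) hg, ?_⟩
      funext j
      show v (g⁻¹ (σinf j)) = v ((σinf⁻¹ * g)⁻¹ j)
      rw [mul_inv_rev, inv_inv, Equiv.Perm.mul_apply]
    · rw [map_zero]; exact Submodule.zero_mem V
    · intro x y _ _ hx hy; rw [map_add]; exact add_mem hx hy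
    · intro a x _ hx; rw [map_smul]; exact Submodule.smul_mem V a hx
  set P : Submodule ℚ (Fin n → ℚ) := Submodule.map πL V with hPdef
  have hPshift : ∀ z ∈ P, (fun i => z (i+1)) ∈ P := by
    rintro z ⟨x, hx, rfl⟩
    exact ⟨A x, hAV x hx, hπA x⟩
  have h1P : (fun _ : Fin n => (1:ℚ)) ∈ P := by
    have hvS : v ∈ S := by
      refine ⟨1, one_mem G, ?_⟩
      funext j
      simp
    refine ⟨v, Submodule.subset_span hvS, ?_⟩
    funext i
    show v (emb i) = 1
    simp only [hv]
    rw [if_pos (show ((emb i : Fin (2*n)) : ℕ) < n from i.isLt)]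
    -- the mixing element gives a non-constant sign vector
  obtain ⟨σ, hσG, ⟨x₁, hx₁n, hσx₁⟩, ⟨x₂, hx₂n, hσx₂⟩⟩ := hmix
  have hvgS : (fun j => v ((σ⁻¹)⁻¹ j)) ∈ S := ⟨σ⁻¹, inv_mem hσG, rfl⟩
  set ε : Fin n → ℚ := πL (fun j => v ((σ⁻¹)⁻¹ j)) with hεdef
  have hεP : ε ∈ P := ⟨_, Submodule.subset_span hvgS, rfl⟩
  have hεapp : ∀ i : Fin n, ε i = if ((σ (emb i)) : ℕ) < n then (1:ℚ) else -1 := by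
    intro i
    show v ((σ⁻¹)⁻¹ (emb i)) = _
    rw [inv_inv]
    simp only [hv]
  have hembx₁ : emb ⟨(x₁:ℕ), hx₁n⟩ = x₁ := Fin.ext rfl
  have hembx₂ : emb ⟨(x₂:ℕ), hx₂n⟩ = x₂ := Fin.ext rfl
  have hε₁ : ε ⟨(x₁:ℕ), hx₁n⟩ = 1 := by rw [hεapp, hembx₁, if_pos hσx₁]
  have hε₂ : ε ⟨(x₂:ℕ), hx₂n⟩ = -1 := by rw [hεapp, hembx₂, if_neg (not_lt.mpr hσx₂)]
  have hnc : ∃ i₀ : Fin n, ε (i₀ + 1) ≠ ε i₀ := by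
    by_contra hcon
    push_neg at hcon
    have hconstm : ∀ m : ℕ, ∀ i : Fin n, ε (i + (m : Fin n)) = ε i := by
      intro m
      induction m with
      | zero => intro i; simp
      | succ m ih =>
        intro i
        push_cast
        rw [← add_assoc, hcon, ih]
    have h12 : ε ⟨(x₂:ℕ), hx₂n⟩ = ε ⟨(x₁:ℕ), hx₁n⟩ := by
      set i₁ : Fin n := ⟨(x₁:ℕ), hx₁n⟩
      set i₂ : Fin n := ⟨(x₂:ℕ), hx₂n⟩
      have hsum : i₁ + (((i₂ - i₁) : Fin n).val : Fin n) = i₂ := by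
        rw [Fin.cast_val_eq_self]
        ring
      rw [← hsum, hconstm]
    rw [hε₁, hε₂] at h12
    norm_num at h12
  obtain ⟨i₀, hi₀⟩ := hnc
  set dd : Fin n → ℚ := (fun i => ε (i+1)) - ε with hdddef
  have hddP : dd ∈ P := sub_mem (hPshift ε hεP) hεP
  have hdd0 : dd ≠ 0 := by
    intro hz
    have := congrFun hz i₀
    simp only [hdddef, Pi.sub_apply, Pi.zero_apply] at this
    exact hi₀ (by linarith)
  have hddsum : ∑ i, dd i = 0 := by
    have hshift : ∑ i : Fin n, ε (i + 1) = ∑ i : Fin n, ε i :=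
      Fintype.sum_equiv (Equiv.addRight 1) _ _ (fun i => rfl)
    simp only [hdddef, Pi.sub_apply]
    rw [Finset.sum_sub_distrib, hshift, sub_self]
  -- the aux lemma gives the indicator of 0 in the projection
  have he₀ : (fun i : Fin n => if i = 0 then (1:ℚ) else 0) ∈ P :=
    aux_span_shift n hn P hPshift h1P dd hddP hdd0 hddsum
  obtain ⟨x, hxV, hπx⟩ := he₀
  set x' : Fin (2*n) → ℚ := (2:ℚ)⁻¹ • x with hx'def
  have hx'V : x' ∈ V := Submodule.smul_mem V _ hxV
  have hπx' : πL x' = (2:ℚ)⁻¹ • (fun i : Fin n => if i = 0 then (1:ℚ) else 0) := by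
    rw [hx'def, map_smul, hπx]
  have hx'first : ∀ i : Fin n, x' (emb i) = if i = 0 then (2:ℚ)⁻¹ else 0 := by
    intro i
    have h := congrFun hπx' i
    simp only [Pi.smul_apply, smul_eq_mul] at h
    have h2 : x' (emb i) = πL x' i := rfl
    rw [h2, h]
    split <;> norm_num
  have hx'W := hVW x' hx'V
  have hx'val : ∀ j : Fin (2*n),
      x' j = if (j:ℕ) = 0 then (2:ℚ)⁻¹ else if (j:ℕ) = n + r then -(2:ℚ)⁻¹ else 0 := by
    intro j
    by_cases hj : (j:ℕ) < n
    · have hjemb : emb ⟨(j:ℕ), hj⟩ = j := Fin.ext rfl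
      have h1' := hx'first ⟨(j:ℕ), hj⟩
      rw [hjemb] at h1'
      rw [h1']
      by_cases h0 : (j:ℕ) = 0
      · rw [if_pos (by apply Fin.ext; simpa using h0), if_pos h0]
      · rw [if_neg (fun hcon => h0 (by simpa using congrArg Fin.val hcon)), if_neg h0,
          if_neg (by omega)]
    · have hm : (j:ℕ) - n < n := by have := j.isLt; omega
      have hivlt : (if r ≤ (j:ℕ) - n then (j:ℕ) - n - r else (j:ℕ) - n + n - r) < n := by
        split <;> omega
      set iv : ℕ := if r ≤ (j:ℕ) - n then (j:ℕ) - n - r else (j:ℕ) - n + n - r with hivdef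
      have hkey : n + ((iv + r) % n) = (j:ℕ) := by
        rw [hivdef]
        by_cases hc : r ≤ (j:ℕ) - n
        · rw [if_pos hc]
          have he : (j:ℕ) - n - r + r = (j:ℕ) - n := by omega
          rw [he, Nat.mod_eq_of_lt hm]
          omega
        · rw [if_neg hc]
          have he : (j:ℕ) - n + n - r + r = ((j:ℕ) - n) + n := by omega
          rw [he, Nat.add_mod_right, Nat.mod_eq_of_lt hm]
          omega
      have hjemb2 : emb2 ⟨iv, hivlt⟩ = j := Fin.ext hkey
      have h2' := hx'W ⟨iv, hivlt⟩
      rw [hjemb2] at h2'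
      rw [h2', hx'first ⟨iv, hivlt⟩]
      have hiv0 : ((⟨iv, hivlt⟩ : Fin n) = 0) ↔ iv = 0 := by
        constructor
        · intro h; simpa using congrArg Fin.val h
        · intro h; apply Fin.ext; simpa using h
      have hjn0 : ¬ ((j:ℕ) = 0) := by omega
      rw [if_neg hjn0]
      by_cases hiv : iv = 0
      · rw [if_pos (hiv0.mpr hiv)]
        rw [hiv, Nat.zero_add, Nat.mod_eq_of_lt hr] at hkey
        rw [if_pos (by omega)]
      · have hjnr : ¬ ((j:ℕ) = n + r) := by
          intro hcon
          apply hiv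
          rw [hcon] at hkey
          have hmod : (iv + r) % n = r := by omega
          rcases Nat.lt_or_ge (iv + r) n with hlt | hge
          · rw [Nat.mod_eq_of_lt hlt] at hmod; omega
          · have h3 : iv + r - n < n := by omega
            rw [Nat.mod_eq_sub_mod hge, Nat.mod_eq_of_lt h3] at hmod
            omega
        rw [if_neg (fun hcon => hiv (hiv0.mp hcon)), if_neg hjnr, neg_zero]
  have hfinal : e₁ = x' + (2:ℚ)⁻¹ • w := by
    funext j
    simp only [he₁, hw, Pi.add_apply, Pi.smul_apply, smul_eq_mul]
    rw [hx'val j]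
    by_cases h0 : (j:ℕ) = 0
    · rw [if_pos h0, if_pos h0, if_pos (Or.inl h0)]
      norm_num
    · rw [if_neg h0, if_neg h0]
      by_cases hnr : (j:ℕ) = n + r
      · rw [if_pos hnr, if_pos (Or.inr hnr)]
        norm_num
      · rw [if_neg hnr, if_neg (by tauto : ¬((j:ℕ) = 0 ∨ (j:ℕ) = n + r))]
        norm_num
  rw [hfinal]
  exact Submodule.add_mem_sup hx'V
    (Submodule.smul_mem _ _ (Submodule.mem_span_singleton_self w))
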